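/- Let p > 1 be a real number. For all real numbers a and b, one has Φ_p(a − b)·(a⁻ − b⁻) ≤ −|a⁻ − b⁻|^p. -/
import Mathlib


/-- `Φ_p(t) = |t|^{p-2} t`. -/
noncomputable def Phi (p t : ℝ) : ℝ := |t| ^ (p - 2) * t

/-- Testing against negative parts: `Φ_p(a − b)(a⁻ − b⁻) ≤ −|a⁻ − b⁻|^p`. -/
theorem Phi_negPart_pointwise (p : ℝ) (hp : 1 < p) (a b : ℝ) :
    Phi p (a - b) * (max (-a) 0 - max (-b) 0) ≤ -|max (-a) 0 - max (-b) 0| ^ p := by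
  set t := a - b with ht
  set d := max (-a) 0 - max (-b) 0 with hd
  have hdt : |d| ≤ |t| := by
    have h := abs_max_sub_max_le_abs (-a) (-b) 0
    have : (-a) - (-b) = -(a - b) := by ring
    rw [this, abs_neg] at h
    exact h
  have hmul : t * d ≤ 0 := by
    rcases le_total a b with h | h
    · have h1 : max (-b) 0 ≤ max (-a) 0 := max_le_max (by linarith) le_rfl
      exact mul_nonpos_iff.2 (Or.inr ⟨by rw [ht]; linarith, by rw [hd]; linarith⟩)
    · have h1 : max (-a) 0 ≤ max (-b) 0 := max_le_max (by linarith) le_rfl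
      exact mul_nonpos_iff.2 (Or.inl ⟨by rw [ht]; linarith, by rw [hd]; linarith⟩)
  by_cases hd0 : d = 0
  · simp [hd0, Real.zero_rpow (by linarith : p ≠ 0)]
  · have hdpos : (0:ℝ) < |d| := abs_pos.2 hd0
    have htpos : (0:ℝ) < |t| := lt_of_lt_of_le hdpos hdt
    have ht0 : t ≠ 0 := fun h => by simp [h] at htpos
    have htd : t * d = -(|t| * |d|) := by
      rw [← abs_mul]
      exact (abs_of_nonpos hmul ▸ (neg_neg (t*d)).symm)
    have key : Phi p t * d = -(|t| ^ (p - 1) * |d|) := by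
      have h1 : |t| ^ (p - 1) = |t| ^ (p - 2) * |t| := by
        rw [show p - 1 = (p - 2) + 1 by ring, Real.rpow_add_one (abs_ne_zero.2 ht0)]
      rw [Phi, mul_assoc, htd, h1]
      ring
    rw [key]
    have h2 : |d| ^ (p - 1) ≤ |t| ^ (p - 1) :=
      Real.rpow_le_rpow (abs_nonneg d) hdt (by linarith)
    have h3 : |d| ^ (p - 1) * |d| = |d| ^ p := by
      rw [← Real.rpow_add_one (abs_ne_zero.2 hd0), sub_add_cancel]
    rw [← h3]
    have := mul_le_mul_of_nonneg_right h2 (abs_nonneg d)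
    linarith
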